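/- Let Z be an abelian group, let A ⊆ Z be finite and nonempty, and let K ≥ 1 be a real number with |A − A| ≤ K|A|. Then |{(a, a′) ∈ A × A : |A[a − a′]| ≥ |A|/(2K)}| ≥ |A|²/2. -/

import Mathlib

open Finset Pointwise
open scoped Classical

/-- `A[t] = (A + t) ∩ A`. -/
def shiftInter {Z : Type*} [AddCommGroup Z] [DecidableEq Z] (A : Finset Z) (t : Z) : Finset Z :=
  (A.image (fun a => a + t)) ∩ A

/-- If `|A − A| ≤ K|A|` with `K ≥ 1`, then
`|{(a,a′) ∈ A × A : |A[a − a′]| ≥ |A|/(2K)}| ≥ |A|²/2`. -/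
theorem statement8 {Z : Type*} [AddCommGroup Z] [DecidableEq Z]
    (A : Finset Z) (hA : A.Nonempty) (K : ℝ) (hK : 1 ≤ K)
    (hdoub : ((A - A).card : ℝ) ≤ K * (A.card : ℝ)) :
    (A.card : ℝ) ^ 2 / 2 ≤
      (((A ×ˢ A).filter
        (fun p => (A.card : ℝ) / (2 * K) ≤ ((shiftInter A (p.1 - p.2)).card : ℝ))).card : ℝ) := by
  classical
  have hK0 : (0:ℝ) < K := lt_of_lt_of_le one_pos hK
  set P : Z × Z → Prop := fun p => (A.card : ℝ) / (2 * K) ≤ ((shiftInter A (p.1 - p.2)).card : ℝ)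
    with hPdef
  set good := (A ×ˢ A).filter P with hgood
  set bad := (A ×ˢ A).filter (fun p => ¬ P p) with hbad
  have hsplit : good.card + bad.card = A.card ^ 2 := by
    rw [hgood, hbad, Finset.card_filter_add_card_filter_not, Finset.card_product, sq]
  -- each fiber of `bad` over `t = p.1 - p.2` has small cardinality
  have hfib : ∀ t : Z,
      (((bad.filter (fun p => p.1 - p.2 = t)).card : ℝ)) ≤ (A.card : ℝ) / (2 * K) := by
    intro t
    by_cases hPt : (A.card : ℝ) / (2 * K) ≤ ((shiftInter A t).card : ℝ)
    · have : bad.filter (fun p => p.1 - p.2 = t) = ∅ := by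
        apply Finset.eq_empty_of_forall_notMem
        intro p hp
        simp only [hbad, Finset.mem_filter] at hp
        exact hp.1.2 (by rw [hPdef]; simpa [hp.2] using hPt)
      rw [this]
      simp only [Finset.card_empty, Nat.cast_zero]
      positivity
    · refine le_trans ?_ (le_of_lt (not_le.mp hPt))
      have hcard : (bad.filter (fun p => p.1 - p.2 = t)).card ≤ (shiftInter A t).card := by
        apply Finset.card_le_card_of_injOn (fun p => p.1)
        · intro p hp
          simp only [hbad, Finset.mem_coe, Finset.mem_filter, Finset.mem_product] at hp
          obtain ⟨⟨⟨h1, h2⟩, _⟩, ht⟩ := hp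
          simp only [shiftInter, Finset.mem_coe, Finset.mem_inter, Finset.mem_image]
          exact ⟨⟨p.2, h2, by rw [← ht]; abel⟩, h1⟩
        · intro p hp q hq hpq
          simp only [hbad, Finset.mem_coe, Finset.mem_filter] at hp hq
          have hx : p.1 = q.1 := hpq
          have hy : p.2 = q.2 := by
            have h := hp.2.trans hq.2.symm
            rw [hx] at h
            calc p.2 = q.1 - (q.1 - p.2) := (sub_sub_cancel _ _).symm
              _ = q.1 - (q.1 - q.2) := by rw [h]
              _ = q.2 := sub_sub_cancel _ _
          exact Prod.ext hx hy
      exact_mod_cast hcard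
  -- bad is small
  have hbadcard : (bad.card : ℝ) ≤ (A.card : ℝ) ^ 2 / 2 := by
    have hdecomp : bad.card = ∑ t ∈ (A - A), (bad.filter (fun p => p.1 - p.2 = t)).card := by
      apply Finset.card_eq_sum_card_fiberwise
      intro p hp
      simp only [hbad, Finset.mem_coe, Finset.mem_filter, Finset.mem_product] at hp
      exact Finset.sub_mem_sub hp.1.1 hp.1.2
    have hsum : ((bad.card : ℝ)) ≤ ((A - A).card : ℝ) * ((A.card : ℝ) / (2 * K)) := by
      rw [hdecomp]
      push_cast
      calc ∑ t ∈ (A - A), ((bad.filter (fun p => p.1 - p.2 = t)).card : ℝ)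
          ≤ ∑ _t ∈ (A - A), (A.card : ℝ) / (2 * K) :=
            Finset.sum_le_sum (fun t _ => hfib t)
        _ = ((A - A).card : ℝ) * ((A.card : ℝ) / (2 * K)) := by
            rw [Finset.sum_const, nsmul_eq_mul]
    have h2 : ((A - A).card : ℝ) * ((A.card : ℝ) / (2 * K))
        ≤ (K * (A.card : ℝ)) * ((A.card : ℝ) / (2 * K)) := by
      apply mul_le_mul_of_nonneg_right hdoub
      positivity
    have h3 : (K * (A.card : ℝ)) * ((A.card : ℝ) / (2 * K)) = (A.card : ℝ) ^ 2 / 2 := by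
      field_simp
    calc (bad.card : ℝ) ≤ _ := hsum
      _ ≤ _ := h2
      _ = _ := h3
  have := hsplit
  have hcast : (good.card : ℝ) + (bad.card : ℝ) = (A.card : ℝ) ^ 2 := by exact_mod_cast hsplit
  linarith
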